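/- Let T be a triangulated category and let C1, C2 be strictly full triangulated subcategories of T such that Hom_T(X, Y) = 0 for every object X of C2 and every object Y of C1. If the smallest strictly full triangulated subcategory of T containing both C1 and C2 is all of T, then for every object D of T there exists a distinguished triangle B ⟶ D ⟶ A ⟶ B⟦1⟧ with B an object of C2 and A an object of C1. -/

import Mathlib

open CategoryTheory Category Limits Pretriangulated

universe v u

variable (T : Type u) [Category.{v} T] [HasZeroObject T] [HasShift T ℤ]
  [Preadditive T] [∀ n : ℤ, (shiftFunctor T n).Additive] [Pretriangulated T]

/-- A strictly full triangulated subcategory of `T`, encoded as a predicate on objects: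
it contains the zero objects, is closed under isomorphisms, is closed under shifts in
both directions, and is closed under extensions. -/
structure IsTriangulatedSubcategory (P : T → Prop) : Prop where
  zero : ∀ X : T, IsZero X → P X
  isoClosed : ∀ ⦃X Y : T⦄, (X ≅ Y) → P X → P Y
  shift : ∀ (X : T) (n : ℤ), P X → P (X⟦n⟧)
  ext₂ : ∀ Tr : Triangle T, (Tr ∈ distTriang T) → P Tr.obj₁ → P Tr.obj₃ → P Tr.obj₂

/-- The smallest strictly full triangulated subcategory of `T` containing the class `S`:
an object lies in it iff it lies in every strictly full triangulated subcategory
containing `S`. -/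
def smallestTriangulatedContaining (S : T → Prop) : T → Prop :=
  fun X => ∀ P : T → Prop, IsTriangulatedSubcategory T P → (∀ Y, S Y → P Y) → P X

section Aux

variable (C1 C2 : T → Prop)

/-- The predicate: `D` admits a decomposition triangle. -/
def MyDecomp (D : T) : Prop :=
  ∃ (B A : T) (f : B ⟶ D) (g : D ⟶ A) (h : A ⟶ B⟦(1 : ℤ)⟧),
    C2 B ∧ C1 A ∧ (Triangle.mk f g h ∈ distTriang T)

lemma myDecomp_of_triangle (Tr : Triangle T) (hTr : Tr ∈ distTriang T)
    (h1 : C2 Tr.obj₁) (h3 : C1 Tr.obj₃) : MyDecomp T C1 C2 Tr.obj₂ :=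
  ⟨Tr.obj₁, Tr.obj₃, Tr.mor₁, Tr.mor₂, Tr.mor₃, h1, h3, hTr⟩

lemma myDecomp_iso {D D' : T} (e : D ≅ D') (hD : MyDecomp T C1 C2 D) :
    MyDecomp T C1 C2 D' := by
  obtain ⟨B, A, f, g, h, hB, hA, hT⟩ := hD
  refine ⟨B, A, f ≫ e.hom, e.inv ≫ g, h, hB, hA, ?_⟩
  refine isomorphic_distinguished _ hT _ ?_
  exact Triangle.isoMk _ _ (Iso.refl _) e.symm (Iso.refl _) (by simp [Triangle.mk]) (by simp [Triangle.mk])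
    (by simp [Triangle.mk])

lemma myDecomp_shift (hC1 : IsTriangulatedSubcategory T C1)
    (hC2 : IsTriangulatedSubcategory T C2)
    {D : T} (hD : MyDecomp T C1 C2 D) (n : ℤ) : MyDecomp T C1 C2 (D⟦n⟧) := by
  obtain ⟨B, A, f, g, h, hB, hA, hT⟩ := hD
  exact myDecomp_of_triangle T C1 C2 ((Triangle.shiftFunctor T n).obj (Triangle.mk f g h))
    (Triangle.shift_distinguished _ hT n) (hC2.shift B n hB) (hC1.shift A n hA)

/-- A biproduct `W ⊞ A` decomposes. -/
lemma myDecomp_split {W A S : T} (φ : W ⊞ A ≅ S) :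
    ∃ (σ : W ⟶ S) (π : S ⟶ A), Triangle.mk σ π (0 : A ⟶ W⟦(1 : ℤ)⟧) ∈ distTriang T := by
  refine ⟨biprod.inl ≫ φ.hom, φ.inv ≫ biprod.snd, ?_⟩
  refine isomorphic_distinguished _ (binaryBiproductTriangle_distinguished W A) _ ?_
  exact Triangle.isoMk _ _ (Iso.refl _) φ.symm (Iso.refl _) (by simp [binaryBiproductTriangle, Triangle.mk])
    (by simp [binaryBiproductTriangle, Triangle.mk])
    (by simp [binaryBiproductTriangle, Triangle.mk])

/-- If `K` is an extension of a decomposable object by an object of `C2`, then `K`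
is decomposable. -/
lemma myDecomp_caseC2 [IsTriangulated T]
    (hC2 : IsTriangulatedSubcategory T C2)
    {B₀ K S : T} {i₀ : B₀ ⟶ K} {m : K ⟶ S} {n : S ⟶ B₀⟦(1 : ℤ)⟧}
    (hTr : Triangle.mk i₀ m n ∈ distTriang T) (hB₀ : C2 B₀)
    {B_S A_S : T} {f_S : B_S ⟶ S} {g_S : S ⟶ A_S} {h_S : A_S ⟶ B_S⟦(1 : ℤ)⟧}
    (hS : Triangle.mk f_S g_S h_S ∈ distTriang T) (hBS : C2 B_S) (hAS : C1 A_S) :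
    MyDecomp T C1 C2 K := by
  obtain ⟨G, gmap, emap, hG⟩ := distinguished_cocone_triangle (m ≫ g_S)
  have oct := Triangulated.someOctahedron rfl (rot_of_distTriang _ hTr)
    (rot_of_distTriang _ hS) hG
  have hGmem : C2 G := hC2.ext₂ _ oct.mem (hC2.shift _ 1 hB₀) (hC2.shift _ 1 hBS)
  refine myDecomp_of_triangle T C1 C2 (Triangle.mk (m ≫ g_S) gmap emap).invRotate
    (inv_rot_of_distTriang _ hG) ?_ ?_
  · exact hC2.shift _ (-1) hGmem
  · exact hAS

/-- If `Y` is an extension of an object of `C1` by a decomposable object, then `Y`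
is decomposable. -/
lemma myDecomp_caseC1 [IsTriangulated T]
    (hC1 : IsTriangulatedSubcategory T C1)
    {K Y A₀ : T} {a : K ⟶ Y} {b : Y ⟶ A₀} {χ : A₀ ⟶ K⟦(1 : ℤ)⟧}
    (hTr : Triangle.mk a b χ ∈ distTriang T) (hA₀ : C1 A₀)
    (hK : MyDecomp T C1 C2 K) : MyDecomp T C1 C2 Y := by
  obtain ⟨B, A, f, g, h, hB, hA, hKT⟩ := hK
  obtain ⟨Q, qmap, rmap, hQ⟩ := distinguished_cocone_triangle (f ≫ a)
  have oct := Triangulated.someOctahedron rfl hKT hTr hQ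
  have hQA : C1 Q := hC1.ext₂ _ oct.mem hA hA₀
  exact myDecomp_of_triangle T C1 C2 _ hQ hB hQA

/-- If `M` is an extension of an object of `C2` by a decomposable object, then `M`
is decomposable. -/
lemma myDecomp_caseC2' [IsTriangulated T]
    (hC2 : IsTriangulatedSubcategory T C2)
    (hHom : ∀ (X Y : T), C2 X → C1 Y → ∀ f : X ⟶ Y, f = 0)
    {X M B' : T} {a : X ⟶ M} {b : M ⟶ B'} {χ : B' ⟶ X⟦(1 : ℤ)⟧}
    (hTr : Triangle.mk a b χ ∈ distTriang T) (hB' : C2 B')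
    (hX : MyDecomp T C1 C2 X) : MyDecomp T C1 C2 M := by
  obtain ⟨B, A, f, g, h, hB, hA, hXT⟩ := hX
  have hTr' : Triangle.mk (-χ⟦(-1 : ℤ)⟧' ≫ (shiftEquiv T (1 : ℤ)).unitIso.inv.app X) a
      (b ≫ (shiftEquiv T (1 : ℤ)).counitIso.inv.app B') ∈ distTriang T :=
    inv_rot_of_distTriang _ hTr
  set χ' : B'⟦(-1 : ℤ)⟧ ⟶ X := -χ⟦(-1 : ℤ)⟧' ≫ (shiftEquiv T (1 : ℤ)).unitIso.inv.app X with hχ'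
  have hzero : χ' ≫ g = 0 := hHom _ _ (hC2.shift B' (-1) hB') hA _
  obtain ⟨S, jmap, kmap, hS0⟩ := distinguished_cocone_triangle (0 : B'⟦(-1 : ℤ)⟧ ⟶ A)
  have oct := Triangulated.someOctahedron hzero hTr' (rot_of_distTriang _ hXT) hS0
  -- `S` splits as `A ⊞ B'⟦-1⟧⟦1⟧`
  obtain ⟨e, -, -⟩ := exists_iso_binaryBiproduct_of_distTriang _
    (rot_of_distTriang _ hS0) (by simp [Triangle.mk]; rfl)
  obtain ⟨σ, π, hSdec⟩ := myDecomp_split T (W := B'⟦(-1 : ℤ)⟧⟦(1 : ℤ)⟧) (A := A) (S := S)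
    ((biprod.braiding _ _) ≪≫ e.symm)
  exact myDecomp_caseC2 T C1 C2 hC2 (inv_rot_of_distTriang _ oct.mem)
    (hC2.shift _ (-1) (hC2.shift _ 1 hB)) hSdec
    (hC2.shift _ 1 (hC2.shift _ (-1) hB')) hA

/-- Decomposability is closed under extensions. -/
lemma myDecomp_ext [IsTriangulated T]
    (hC1 : IsTriangulatedSubcategory T C1) (hC2 : IsTriangulatedSubcategory T C2)
    (hHom : ∀ (X Y : T), C2 X → C1 Y → ∀ f : X ⟶ Y, f = 0)
    (Tr : Triangle T) (hTr : Tr ∈ distTriang T)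
    (h₁ : MyDecomp T C1 C2 Tr.obj₁) (h₃ : MyDecomp T C1 C2 Tr.obj₃) :
    MyDecomp T C1 C2 Tr.obj₂ := by
  obtain ⟨B_Z, A_Z, f_Z, g_Z, h_Z, hBZ, hAZ, hZT⟩ := h₃
  obtain ⟨K, a', h', hK⟩ := distinguished_cocone_triangle₁ (Tr.mor₂ ≫ g_Z)
  have oct := Triangulated.someOctahedron rfl (rot_of_distTriang _ hTr)
    (rot_of_distTriang _ hZT) (rot_of_distTriang _ hK)
  -- `K⟦1⟧` is an extension of `B_Z⟦1⟧ ∈ C2` by `Tr.obj₁⟦1⟧`, which is decomposable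
  have hK1 : MyDecomp T C1 C2 (K⟦(1 : ℤ)⟧) :=
    myDecomp_caseC2' T C1 C2 hC2 hHom oct.mem (hC2.shift _ 1 hBZ)
      (myDecomp_shift T C1 C2 hC1 hC2 h₁ 1)
  have hKdec : MyDecomp T C1 C2 K :=
    myDecomp_iso T C1 C2 (((shiftEquiv T (1 : ℤ)).unitIso.app K).symm)
      (myDecomp_shift T C1 C2 hC1 hC2 hK1 (-1))
  exact myDecomp_caseC1 T C1 C2 hC1 hK hAZ hKdec

end Aux

/-- If `C₁`, `C₂` are strictly full triangulated subcategories with no nonzero morphisms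
from `C₂` to `C₁` which together generate `T` as a triangulated category, then every
object of `T` fits into a distinguished triangle `B ⟶ D ⟶ A ⟶ B⟦1⟧` with `B ∈ C₂` and
`A ∈ C₁`. -/
theorem generation_gives_decomposition_triangles [IsTriangulated T]
    (C1 C2 : T → Prop)
    (hC1 : IsTriangulatedSubcategory T C1) (hC2 : IsTriangulatedSubcategory T C2)
    (hHom : ∀ (X Y : T), C2 X → C1 Y → ∀ f : X ⟶ Y, f = 0)
    (hgen : ∀ D : T, smallestTriangulatedContaining T (fun Z => C1 Z ∨ C2 Z) D) :
    ∀ D : T, ∃ (B A : T) (f : B ⟶ D) (g : D ⟶ A) (h : A ⟶ B⟦(1 : ℤ)⟧),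
      C2 B ∧ C1 A ∧ (Triangle.mk f g h ∈ distTriang T) := by
  intro D
  have hP : IsTriangulatedSubcategory T (MyDecomp T C1 C2) :=
    { zero := fun X hX => myDecomp_of_triangle T C1 C2 _ (contractible_distinguished X)
        (hC2.zero X hX) (hC1.zero _ (isZero_zero T))
      isoClosed := fun X Y e hX => myDecomp_iso T C1 C2 e hX
      shift := fun X n hX => myDecomp_shift T C1 C2 hC1 hC2 hX n
      ext₂ := fun Tr hTr h1 h3 => myDecomp_ext T C1 C2 hC1 hC2 hHom Tr hTr h1 h3 }
  refine hgen D (MyDecomp T C1 C2) hP ?_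
  rintro Y (hY | hY)
  · refine myDecomp_of_triangle T C1 C2 (contractibleTriangle Y).invRotate
      (inv_rot_of_distTriang _ (contractible_distinguished Y)) ?_ hY
    exact hC2.shift _ (-1) (hC2.zero _ (isZero_zero T))
  · exact myDecomp_of_triangle T C1 C2 (contractibleTriangle Y)
      (contractible_distinguished Y) hY (hC1.zero _ (isZero_zero T))
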